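/- Let (α, f) and (β, g) be FDDS. The unrolls U(f) and U(g) are isomorphic if and only if for every natural number n the cuts at depth n, U_n(f) and U_n(g), are isomorphic. -/

import Mathlib

/-- Isomorphism of finite dynamical systems: a bijection commuting with the maps. -/
def FddsIso {α β : Type} (f : α → α) (g : β → β) : Prop :=
  ∃ e : α ≃ β, ⇑e ∘ f = g ∘ ⇑e

/-- A state is periodic if some positive iterate fixes it. -/
def IsPeriodicState {α : Type} (f : α → α) (x : α) : Prop :=
  ∃ n > 0, f^[n] x = x

/-- The vertex set of the unroll of `(α, f)`. -/
def UnrollSet {α : Type} (f : α → α) : Set (α × ℕ) :=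
  {p | IsPeriodicState f (f^[p.2] p.1)}

/-- The parent map of the unroll. -/
def unrollMap {α : Type} (f : α → α) (q : UnrollSet f) : UnrollSet f :=
  if h : q.1.2 = 0 then q
  else ⟨(f q.1.1, q.1.2 - 1), by
    obtain ⟨⟨x, k⟩, hq⟩ := q
    simp only at h
    obtain ⟨k', rfl⟩ := Nat.exists_eq_succ_of_ne_zero h
    simpa [UnrollSet, Function.iterate_succ_apply] using hq⟩

/-- Isomorphism of unrolls. -/
def UnrollIso {α β : Type} (f : α → α) (g : β → β) : Prop :=
  ∃ φ : UnrollSet f ≃ UnrollSet g, ⇑φ ∘ unrollMap f = unrollMap g ∘ ⇑φ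

/-- Vertices of the cut at depth `n` of the unroll. -/
def CutSet {α : Type} (f : α → α) (n : ℕ) : Set (α × ℕ) :=
  {p | p ∈ UnrollSet f ∧ p.2 ≤ n}

/-- The parent map of the cut at depth `n`. -/
def cutMap {α : Type} (f : α → α) (n : ℕ) (q : CutSet f n) : CutSet f n :=
  if h : q.1.2 = 0 then q
  else ⟨(f q.1.1, q.1.2 - 1), by
    obtain ⟨⟨x, k⟩, hq⟩ := q
    obtain ⟨hq1, hq2⟩ := hq
    simp only at h hq2 ⊢
    obtain ⟨k', rfl⟩ := Nat.exists_eq_succ_of_ne_zero h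
    refine ⟨by simpa [UnrollSet, Function.iterate_succ_apply] using hq1, by omega⟩⟩

/-- Isomorphism of cuts at depth `n`. -/
def CutIso {α β : Type} (f : α → α) (g : β → β) (n : ℕ) : Prop :=
  ∃ φ : CutSet f n ≃ CutSet g n, ⇑φ ∘ cutMap f n = cutMap g n ∘ ⇑φ

/-- The states of the components whose cycle length divides `p`. -/
def DivSet {α : Type} (f : α → α) (p : ℕ) : Set α :=
  {x | ∃ N, f^[N + p] x = f^[N] x}

/-- The restriction of `f` to `DivSet f p`. -/
def divMap {α : Type} (f : α → α) (p : ℕ) (q : DivSet f p) : DivSet f p :=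
  ⟨f q.1, by
    obtain ⟨x, N, hN⟩ := q
    exact ⟨N, by
      rw [← Function.iterate_succ_apply, ← Function.iterate_succ_apply,
        Function.iterate_succ_apply', Function.iterate_succ_apply', hN]⟩⟩

/-- `k`-th power of an FDDS: map on `Fin k → α`. -/
def powMap {α : Type} (f : α → α) (k : ℕ) (v : Fin k → α) : Fin k → α := f ∘ v

/-- Evaluation of the polynomial `Σ_{i=0}^m A_i X^i` at `(α, f)`. -/
def polyEval {m : ℕ} {γ : Fin (m + 1) → Type} (g : ∀ i, γ i → γ i)
    {α : Type} (f : α → α)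
    (x : Σ i : Fin (m + 1), γ i × (Fin i.val → α)) :
    Σ i : Fin (m + 1), γ i × (Fin i.val → α) :=
  ⟨x.1, g x.1 x.2.1, f ∘ x.2.2⟩

/-- Evaluation of the constant-free polynomial `Σ_{i=1}^m A_i X^i` at `(α, f)`. -/
def polyEvalNC {m : ℕ} {γ : Fin m → Type} (g : ∀ i, γ i → γ i)
    {α : Type} (f : α → α)
    (x : Σ i : Fin m, γ i × (Fin (i.val + 1) → α)) :
    Σ i : Fin m, γ i × (Fin (i.val + 1) → α) :=
  ⟨x.1, g x.1 x.2.1, f ∘ x.2.2⟩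

/-- An FDDS is cancelable if it can be canceled from products. -/
def Cancelable {α : Type} (f : α → α) : Prop :=
  ∀ (β γ : Type) [Fintype β] [Fintype γ] (g : β → β) (h : γ → γ),
    FddsIso (Prod.map f g) (Prod.map f h) → FddsIso g h

namespace UnrollIsoAux

/-- The common underlying value of the parent maps. -/
def pmapAux {α : Type} (f : α → α) (p : α × ℕ) : α × ℕ :=
  if p.2 = 0 then p else (f p.1, p.2 - 1)

lemma pmapAux_snd {α : Type} (f : α → α) (p : α × ℕ) : (pmapAux f p).2 = p.2 - 1 := by
  unfold pmapAux; split <;> simp_all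

lemma unrollMap_val {α : Type} (f : α → α) (q : UnrollSet f) :
    (unrollMap f q).1 = pmapAux f q.1 := by
  unfold unrollMap pmapAux; split <;> simp_all

lemma cutMap_val {α : Type} (f : α → α) (n : ℕ) (q : CutSet f n) :
    (cutMap f n q).1 = pmapAux f q.1 := by
  unfold cutMap pmapAux; split <;> simp_all

section Depth

variable {α β : Type} {f : α → α} {g : β → β} {S : Set (α × ℕ)} {T : Set (β × ℕ)}

lemma fixed_of_depth_zero (μ : S → S) (hμ : ∀ q, (μ q).1 = pmapAux f q.1)
    (q : S) (h : q.1.2 = 0) : μ q = q := by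
  apply Subtype.ext; rw [hμ]; unfold pmapAux; simp [h]

lemma depth_zero_of_fixed (μ : S → S) (hμ : ∀ q, (μ q).1 = pmapAux f q.1)
    (q : S) (h : μ q = q) : q.1.2 = 0 := by
  have h2 := congrArg (fun r : S => r.1.2) h
  simp only [hμ, pmapAux_snd] at h2
  omega

lemma iter_depth (μ : S → S) (hμ : ∀ q, (μ q).1 = pmapAux f q.1)
    (j : ℕ) (q : S) : (μ^[j] q).1.2 = q.1.2 - j := by
  induction j with
  | zero => simp
  | succ j ih =>
      rw [Function.iterate_succ_apply', hμ, pmapAux_snd, ih]; omega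

lemma depth_le (μ : S → S) (ν : T → T)
    (hμ : ∀ q, (μ q).1 = pmapAux f q.1) (hν : ∀ q, (ν q).1 = pmapAux g q.1)
    (e : S → T) (he : ∀ q, e (μ q) = ν (e q)) (q : S) : (e q).1.2 ≤ q.1.2 := by
  set d := q.1.2 with hd
  have h1 : μ (μ^[d] q) = μ^[d] q :=
    fixed_of_depth_zero μ hμ _ (by rw [iter_depth μ hμ]; omega)
  have h2 : e (μ^[d] q) = ν^[d] (e q) := (Function.Semiconj.iterate_right he d) q
  have h3 : ν (ν^[d] (e q)) = ν^[d] (e q) := by rw [← h2, ← he, h1]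
  have h4 := depth_zero_of_fixed ν hν _ h3
  rw [iter_depth ν hν] at h4
  omega

lemma comm_symm {A B : Type} (μ : A → A) (ν : B → B) (e : A ≃ B)
    (he : ⇑e ∘ μ = ν ∘ ⇑e) : ⇑e.symm ∘ ν = μ ∘ ⇑e.symm := by
  funext r
  apply e.injective
  have h1 := congrFun he (e.symm r)
  simp only [Function.comp] at h1 ⊢
  rw [Equiv.apply_symm_apply, h1, Equiv.apply_symm_apply]

lemma depth_pres (μ : S → S) (ν : T → T)
    (hμ : ∀ q, (μ q).1 = pmapAux f q.1) (hν : ∀ q, (ν q).1 = pmapAux g q.1)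
    (e : S ≃ T) (he : ⇑e ∘ μ = ν ∘ ⇑e) (q : S) : (e q).1.2 = q.1.2 := by
  have h1 := depth_le μ ν hμ hν e (fun q => congrFun he q) q
  have h2 := depth_le ν μ hν hμ e.symm (fun r => congrFun (comm_symm μ ν e he) r) (e q)
  rw [Equiv.symm_apply_apply] at h2
  omega

end Depth

end UnrollIsoAux
namespace UnrollIsoAux

set_option linter.unusedSectionVars false

open CategoryTheory Opposite

section Main

variable {α β : Type} [Fintype α] [Fintype β] (f : α → α) (g : β → β)

lemma cutSet_finite (n : ℕ) : (CutSet f n).Finite := by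
  apply Set.Finite.subset ((Set.finite_univ (α := α)).prod (Set.finite_Iic n))
  intro p hp
  exact ⟨Set.mem_univ _, hp.2⟩

instance cutSetFinite (n : ℕ) : Finite (CutSet f n) := (cutSet_finite f n).to_subtype

/-- Inclusion of cuts. -/
def liftCut {m n : ℕ} (h : m ≤ n) (p : CutSet f m) : CutSet f n :=
  ⟨p.1, p.2.1, p.2.2.trans h⟩

/-- Lowering a vertex of a cut to the cut of any depth above its own. -/
def lowerCut {m n : ℕ} (q : CutSet f n) (hd : q.1.2 ≤ m) : CutSet f m :=
  ⟨q.1, q.2.1, hd⟩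

@[simp] lemma liftCut_lowerCut {m n : ℕ} (h : m ≤ n) (q : CutSet f n)
    (hd : q.1.2 ≤ m) : liftCut f h (lowerCut f q hd) = q := Subtype.ext rfl

@[simp] lemma lowerCut_val {m n : ℕ} (q : CutSet f n) (hd : q.1.2 ≤ m) :
    (lowerCut f q hd : α × ℕ) = q.1 := rfl

@[simp] lemma liftCut_val {m n : ℕ} (h : m ≤ n) (p : CutSet f m) :
    (liftCut f h p : α × ℕ) = p.1 := rfl

/-- Bundled cut isomorphisms at depth `n`. -/
def CutIsoT (n : ℕ) : Type :=
  {e : CutSet f n ≃ CutSet g n // ⇑e ∘ cutMap f n = cutMap g n ∘ ⇑e}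

instance cutIsoTFinite (n : ℕ) : Finite (CutIsoT f g n) := by
  unfold CutIsoT
  infer_instance

variable {f g}

lemma cutIsoT_depth {n : ℕ} (e : CutIsoT f g n) (q : CutSet f n) :
    (e.1 q : β × ℕ).2 = (q : α × ℕ).2 :=
  depth_pres (cutMap f n) (cutMap g n) (cutMap_val f n) (cutMap_val g n) e.1 e.2 q

lemma cutIsoT_depth_symm {n : ℕ} (e : CutIsoT f g n) (q : CutSet g n) :
    (e.1.symm q : α × ℕ).2 = (q : β × ℕ).2 :=
  depth_pres (cutMap g n) (cutMap f n) (cutMap_val g n) (cutMap_val f n) e.1.symm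
    (comm_symm _ _ e.1 e.2) q

variable (f g)

/-- Restriction of a cut isomorphism at depth `n` to depth `m ≤ n`. -/
def cutRes {m n : ℕ} (h : m ≤ n) (e : CutIsoT f g n) : CutIsoT f g m :=
  ⟨{ toFun := fun p => lowerCut g (e.1 (liftCut f h p))
       (by rw [cutIsoT_depth]; exact p.2.2)
     invFun := fun p => lowerCut f (e.1.symm (liftCut g h p))
       (by rw [cutIsoT_depth_symm]; exact p.2.2)
     left_inv := fun p => by
       apply Subtype.ext
       rw [lowerCut_val, liftCut_lowerCut, Equiv.symm_apply_apply, liftCut_val]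
     right_inv := fun p => by
       apply Subtype.ext
       rw [lowerCut_val, liftCut_lowerCut, Equiv.apply_symm_apply, liftCut_val] }, by
    funext p
    apply Subtype.ext
    simp only [Function.comp_apply, Equiv.coe_fn_mk, lowerCut_val]
    have h1 : liftCut f h (cutMap f m p) = cutMap f n (liftCut f h p) := by
      apply Subtype.ext
      rw [liftCut_val, cutMap_val, cutMap_val, liftCut_val]
    rw [h1]
    have h2 := congrFun e.2 (liftCut f h p)
    simp only [Function.comp_apply] at h2
    rw [h2, cutMap_val, cutMap_val, lowerCut_val]⟩

/-- The inverse system of cut isomorphisms. -/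
def cutFunctor : ℕᵒᵖ ⥤ Type where
  obj n := CutIsoT f g n.unop
  map {n m} h := TypeCat.ofHom fun e => cutRes f g (leOfHom h.unop) e
  map_id n := by
    ext e
    apply Subtype.ext
    apply Equiv.ext
    intro p
    apply Subtype.ext
    rfl
  map_comp h1 h2 := by
    ext e
    apply Subtype.ext
    apply Equiv.ext
    intro p
    apply Subtype.ext
    rfl

end Main

end UnrollIsoAux
namespace UnrollIsoAux

set_option linter.unusedSectionVars false

open CategoryTheory Opposite

section Glue

variable {α β : Type} [Fintype α] [Fintype β] (f : α → α) (g : β → β)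

/-- Forgetting the depth bound of a cut vertex. -/
def ofCut {n : ℕ} (p : CutSet f n) : UnrollSet f := ⟨p.1, p.2.1⟩

/-- Viewing an unroll vertex as a vertex of a sufficiently deep cut. -/
def toCutLe {n : ℕ} (q : UnrollSet f) (hd : (q : α × ℕ).2 ≤ n) : CutSet f n :=
  ⟨q.1, q.2, hd⟩

@[simp] lemma ofCut_val {n : ℕ} (p : CutSet f n) : (ofCut f p : α × ℕ) = p.1 := rfl

@[simp] lemma toCutLe_val {n : ℕ} (q : UnrollSet f) (hd : (q : α × ℕ).2 ≤ n) :
    (toCutLe f q hd : α × ℕ) = q.1 := rfl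

@[simp] lemma ofCut_toCutLe {n : ℕ} (q : UnrollSet f) (hd : (q : α × ℕ).2 ≤ n) :
    ofCut f (toCutLe f q hd) = q := Subtype.ext rfl

variable {f g}

lemma unrollIso_depth (φ : UnrollSet f ≃ UnrollSet g)
    (hφ : ⇑φ ∘ unrollMap f = unrollMap g ∘ ⇑φ) (q : UnrollSet f) :
    (φ q : β × ℕ).2 = (q : α × ℕ).2 :=
  depth_pres (unrollMap f) (unrollMap g) (unrollMap_val f) (unrollMap_val g) φ hφ q

lemma unrollIso_depth_symm (φ : UnrollSet f ≃ UnrollSet g)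
    (hφ : ⇑φ ∘ unrollMap f = unrollMap g ∘ ⇑φ) (q : UnrollSet g) :
    (φ.symm q : α × ℕ).2 = (q : β × ℕ).2 :=
  depth_pres (unrollMap g) (unrollMap f) (unrollMap_val g) (unrollMap_val f) φ.symm
    (comm_symm _ _ φ hφ) q

variable (f g)

/-- An unroll isomorphism restricts to a cut isomorphism at every depth. -/
def unrollCut (n : ℕ) (φ : UnrollSet f ≃ UnrollSet g)
    (hφ : ⇑φ ∘ unrollMap f = unrollMap g ∘ ⇑φ) : CutIsoT f g n :=
  ⟨{ toFun := fun p => toCutLe g (φ (ofCut f p))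
       (by rw [unrollIso_depth φ hφ]; exact p.2.2)
     invFun := fun p => toCutLe f (φ.symm (ofCut g p))
       (by rw [unrollIso_depth_symm φ hφ]; exact p.2.2)
     left_inv := fun p => by
       apply Subtype.ext
       rw [toCutLe_val, ofCut_toCutLe, Equiv.symm_apply_apply, ofCut_val]
     right_inv := fun p => by
       apply Subtype.ext
       rw [toCutLe_val, ofCut_toCutLe, Equiv.apply_symm_apply, ofCut_val] }, by
    funext p
    apply Subtype.ext
    simp only [Function.comp_apply, Equiv.coe_fn_mk, toCutLe_val]
    have h1 : ofCut f (cutMap f n p) = unrollMap f (ofCut f p) := by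
      apply Subtype.ext
      rw [ofCut_val, cutMap_val, unrollMap_val, ofCut_val]
    rw [h1]
    have h2 := congrFun hφ (ofCut f p)
    simp only [Function.comp_apply] at h2
    rw [h2, unrollMap_val, cutMap_val, toCutLe_val]⟩

variable {f g}

/-- A coherent family of cut isomorphisms glues to an unroll isomorphism. -/
lemma glue (s : ∀ j : ℕᵒᵖ, CutIsoT f g j.unop)
    (hs : ∀ (m n : ℕ) (hmn : m ≤ n), cutRes f g hmn (s (op n)) = s (op m)) :
    UnrollIso f g := by
  have coh : ∀ (m n : ℕ) (hmn : m ≤ n) (p : CutSet f n) (hd : (p : α × ℕ).2 ≤ m),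
      ((s (op n)).1 p : β × ℕ) = ((s (op m)).1 (lowerCut f p hd) : β × ℕ) := by
    intro m n hmn p hd
    have h1 := congrArg
      (fun e : CutIsoT f g m => (e.1 (lowerCut f p hd) : β × ℕ)) (hs m n hmn)
    simp only [cutRes, Equiv.coe_fn_mk, lowerCut_val, liftCut_lowerCut] at h1
    exact h1
  have idxF : ∀ (m n : ℕ), m = n → ∀ (p : CutSet f m) (p' : CutSet f n),
      (p : α × ℕ) = (p' : α × ℕ) →
      ((s (op m)).1 p : β × ℕ) = ((s (op n)).1 p' : β × ℕ) := by
    intro m n hmn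
    subst hmn
    intro p p' hpp'
    rw [Subtype.ext hpp']
  have idxB : ∀ (m n : ℕ), m = n → ∀ (p : CutSet g m) (p' : CutSet g n),
      (p : β × ℕ) = (p' : β × ℕ) →
      ((s (op m)).1.symm p : α × ℕ) = ((s (op n)).1.symm p' : α × ℕ) := by
    intro m n hmn
    subst hmn
    intro p p' hpp'
    rw [Subtype.ext hpp']
  refine ⟨{ toFun := fun q => ofCut g ((s (op (q : α × ℕ).2)).1 (toCutLe f q le_rfl))
            invFun := fun r => ofCut f ((s (op (r : β × ℕ).2)).1.symm (toCutLe g r le_rfl))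
            left_inv := ?_
            right_inv := ?_ }, ?_⟩
  · intro q
    apply Subtype.ext
    have hdΦ : ((ofCut g ((s (op (q : α × ℕ).2)).1 (toCutLe f q le_rfl)) : UnrollSet g) :
        β × ℕ).2 = (q : α × ℕ).2 := cutIsoT_depth _ (toCutLe f q le_rfl)
    have step := idxB _ _ hdΦ
      (toCutLe g (ofCut g ((s (op (q : α × ℕ).2)).1 (toCutLe f q le_rfl))) le_rfl)
      ((s (op (q : α × ℕ).2)).1 (toCutLe f q le_rfl)) rfl
    rw [Equiv.symm_apply_apply] at step
    exact step
  · intro r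
    apply Subtype.ext
    have hdΨ : ((ofCut f ((s (op (r : β × ℕ).2)).1.symm (toCutLe g r le_rfl)) : UnrollSet f) :
        α × ℕ).2 = (r : β × ℕ).2 := cutIsoT_depth_symm _ (toCutLe g r le_rfl)
    have step := idxF _ _ hdΨ
      (toCutLe f (ofCut f ((s (op (r : β × ℕ).2)).1.symm (toCutLe g r le_rfl))) le_rfl)
      ((s (op (r : β × ℕ).2)).1.symm (toCutLe g r le_rfl)) rfl
    rw [Equiv.apply_symm_apply] at step
    exact step
  · funext q
    apply Subtype.ext
    simp only [Function.comp_apply, Equiv.coe_fn_mk]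
    set n := (q : α × ℕ).2 with hn
    have hmn' : ((unrollMap f q : UnrollSet f) : α × ℕ).2 ≤ n := by
      rw [unrollMap_val, pmapAux_snd]
      omega
    have hd : ((cutMap f n (toCutLe f q le_rfl)) : α × ℕ).2 ≤
        ((unrollMap f q : UnrollSet f) : α × ℕ).2 := by
      rw [cutMap_val, unrollMap_val, toCutLe_val]
    have e1 : (toCutLe f (unrollMap f q) le_rfl) =
        lowerCut f (cutMap f n (toCutLe f q le_rfl)) hd := by
      apply Subtype.ext
      rw [toCutLe_val, lowerCut_val, cutMap_val, unrollMap_val, toCutLe_val]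
    calc ((s (op ((unrollMap f q : UnrollSet f) : α × ℕ).2)).1
            (toCutLe f (unrollMap f q) le_rfl) : β × ℕ)
        = ((s (op ((unrollMap f q : UnrollSet f) : α × ℕ).2)).1
            (lowerCut f (cutMap f n (toCutLe f q le_rfl)) hd) : β × ℕ) := by rw [e1]
      _ = ((s (op n)).1 (cutMap f n (toCutLe f q le_rfl)) : β × ℕ) :=
            (coh _ n hmn' _ hd).symm
      _ = (cutMap g n ((s (op n)).1 (toCutLe f q le_rfl)) : β × ℕ) := by
            have h2 := congrFun (s (op n)).2 (toCutLe f q le_rfl)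
            simp only [Function.comp_apply] at h2
            rw [h2]
      _ = pmapAux g ((s (op n)).1 (toCutLe f q le_rfl) : β × ℕ) := cutMap_val g n _
      _ = (unrollMap g (ofCut g ((s (op n)).1 (toCutLe f q le_rfl))) : β × ℕ) := by
            rw [unrollMap_val, ofCut_val]

end Glue

end UnrollIsoAux

/-- Two unrolls are isomorphic iff all their cuts are isomorphic. -/
theorem unrollIso_iff_forall_cutIso {α β : Type} [Fintype α] [Fintype β]
    (f : α → α) (g : β → β) :
    UnrollIso f g ↔ ∀ n : ℕ, CutIso f g n := by
  constructor
  · rintro ⟨φ, hφ⟩ n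
    exact ⟨(UnrollIsoAux.unrollCut f g n φ hφ).1, (UnrollIsoAux.unrollCut f g n φ hφ).2⟩
  · intro h
    haveI inst1 : ∀ j : ℕᵒᵖ, Finite ((UnrollIsoAux.cutFunctor f g).obj j) :=
      fun j => inferInstanceAs (Finite (UnrollIsoAux.CutIsoT f g j.unop))
    haveI inst2 : ∀ j : ℕᵒᵖ, Nonempty ((UnrollIsoAux.cutFunctor f g).obj j) :=
      fun j => ⟨(⟨(h j.unop).choose, (h j.unop).choose_spec⟩ : UnrollIsoAux.CutIsoT f g j.unop)⟩
    obtain ⟨s, hs⟩ := nonempty_sections_of_finite_inverse_system (UnrollIsoAux.cutFunctor f g)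
    exact UnrollIsoAux.glue s
      (fun m n hmn => by have := hs ((CategoryTheory.homOfLE hmn).op); exact this)
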